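/- For every x ∈ ℤ₂ and every k ∈ ℕ, Φ(x) = Φ(L_k(x)) + (Φ(R_k(x))/3^m)·2^k, where m = α(L_k(x)) and division by 3^m means multiplication by the inverse of 3^m in ℤ₂. -/

import Mathlib

noncomputable section

/-- The inverse of `3` in the ring of 2-adic integers. -/
def inv3 : ℤ_[2] := Ring.inverse 3

/-- The `j`-th binary digit of a 2-adic integer (as `0` or `1`). -/
def dig (x : ℤ_[2]) (j : ℕ) : ℕ := if Nat.testBit (x.appr (j + 1)) j then 1 else 0

/-- The number of one digits of `x` in positions `< j`. -/
def digCount (x : ℤ_[2]) (j : ℕ) : ℕ := ∑ i ∈ Finset.range j, dig x i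

/-- Bernstein's formula for the 3x+1 conjugacy map `Φ`:
if `x = ∑_i 2^{d_i}` with `d_0 < d_1 < ⋯`, then `Φ x = -∑_i 2^{d_i} 3^{-i}`. -/
def Phi (x : ℤ_[2]) : ℤ_[2] :=
  -∑' j : ℕ, (dig x j : ℤ_[2]) * 2 ^ j * inv3 ^ digCount x j

/-- `L_k(x)`: the unique natural number `< 2^k` congruent to `x` mod `2^k`. -/
def Lk (k : ℕ) (x : ℤ_[2]) : ℕ := x.appr k

theorem two_pow_dvd_sub_appr (k : ℕ) (x : ℤ_[2]) :
    (2 : ℤ_[2]) ^ k ∣ x - (x.appr k : ℤ_[2]) := by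
  have h := PadicInt.appr_spec k x
  rw [Ideal.mem_span_singleton] at h
  exact_mod_cast h

theorem exists_Rk (k : ℕ) (x : ℤ_[2]) :
    ∃ z : ℤ_[2], x = (x.appr k : ℤ_[2]) + 2 ^ k * z := by
  obtain ⟨c, hc⟩ := two_pow_dvd_sub_appr k x
  exact ⟨c, by rw [← hc]; ring⟩

/-- `R_k(x)`: the unique 2-adic integer with `x = L_k(x) + 2^k · R_k(x)`. -/
def Rk (k : ℕ) (x : ℤ_[2]) : ℤ_[2] := (exists_Rk k x).choose

/-- `α(a)`: the number of ones in the binary expansion of `a`. -/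
def alphaNat (a : ℕ) : ℕ := (Nat.bits a).count true

/-- `b̄_{v,∞} = b · ∑_{i=0}^∞ 2^{v i}` as a 2-adic integer. -/
def bbar (b v : ℕ) : ℤ_[2] := (b : ℤ_[2]) * ∑' i : ℕ, (2 : ℤ_[2]) ^ (v * i)

/-- `b̄_{v,t} = b · ∑_{i=0}^{t-1} 2^{v i}` as a natural number. -/
def bbarFin (b v t : ℕ) : ℕ := b * ∑ i ∈ Finset.range t, 2 ^ (v * i)

/-- The farPoint `fP(x,k)`: the least `r` such that no 2-adic congruent to `x`
mod `2^k` is a fixed point of `Φ` mod `2^{k+r}`, and `∞` if no such `r` exists. -/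
def fP (x k : ℕ) : ℕ∞ :=
  sInf ((↑) '' {r : ℕ | ∀ z : ℤ_[2],
    (2 : ℤ_[2]) ^ k ∣ z - (x : ℤ_[2]) → ¬ (2 : ℤ_[2]) ^ (k + r) ∣ Phi z - z})

-- AUX
open Finset

lemma dvd_int_iff (n : ℕ) (m : ℤ) : (2:ℤ_[2])^n ∣ (m : ℤ_[2]) ↔ (2:ℤ)^n ∣ m := by
  have h2 : (2:ℤ_[2]) = ((2:ℕ) : ℤ_[2]) := by norm_num
  rw [h2, ← Ideal.mem_span_singleton, ← PadicInt.norm_le_pow_iff_mem_span_pow,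
      PadicInt.norm_int_le_pow_iff_dvd]
  norm_num

lemma nat_eq_of_dvd {a b k : ℕ} (ha : a < 2^k) (hb : b < 2^k)
    (h : (2:ℤ_[2])^k ∣ (a:ℤ_[2]) - b) : a = b := by
  have h2 : ((a:ℤ_[2]) - b) = (((a:ℤ) - b : ℤ) : ℤ_[2]) := by push_cast; ring
  rw [h2, dvd_int_iff] at h
  have ha' : (a:ℤ) < (2:ℤ)^k := by exact_mod_cast ha
  have hb' : (b:ℤ) < (2:ℤ)^k := by exact_mod_cast hb
  have := Int.eq_zero_of_abs_lt_dvd h (by rw [abs_lt]; omega)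
  omega

lemma appr_lt2 (x : ℤ_[2]) (n : ℕ) : x.appr n < 2 ^ n := PadicInt.appr_lt x n

lemma appr_nat (n m : ℕ) : ((n:ℤ_[2]).appr m) = n % 2^m := by
  apply nat_eq_of_dvd (appr_lt2 _ _) (Nat.mod_lt _ (by positivity))
  have h1 := two_pow_dvd_sub_appr m (n : ℤ_[2])
  have hd : (2^m : ℕ) ∣ (n - n % 2^m) := Nat.dvd_sub_mod n
  have h2 : (2:ℤ_[2])^m ∣ (((n - n % 2^m : ℕ)) : ℤ_[2]) := by
    have := Nat.cast_dvd_cast (α := ℤ_[2]) hd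
    push_cast at this ⊢
    exact this
  have hle : n % 2^m ≤ n := Nat.mod_le _ _
  have e : ((((n:ℤ_[2]).appr m : ℕ)) : ℤ_[2]) - ((n % 2^m : ℕ) : ℤ_[2])
      = -((n:ℤ_[2]) - (((n:ℤ_[2]).appr m : ℕ))) + (((n - n % 2^m : ℕ)) : ℤ_[2]) := by
    push_cast [hle]
    ring
  rw [e]
  exact dvd_add (dvd_neg.mpr h1) h2

lemma dig_congr {x y : ℤ_[2]} {j : ℕ} (h : (2:ℤ_[2])^(j+1) ∣ x - y) : dig x j = dig y j := by
  have : x.appr (j+1) = y.appr (j+1) := by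
    apply nat_eq_of_dvd (appr_lt2 _ _) (appr_lt2 _ _)
    have e : ((x.appr (j+1) : ℕ) : ℤ_[2]) - (y.appr (j+1) : ℕ)
        = -(x - (x.appr (j+1) : ℕ)) + (x - y) + (y - (y.appr (j+1) : ℕ)) := by ring
    rw [e]
    exact dvd_add (dvd_add (dvd_neg.mpr (two_pow_dvd_sub_appr _ _)) h) (two_pow_dvd_sub_appr _ _)
  rw [dig, dig, this]

lemma dig_nat (n j : ℕ) : dig (n : ℤ_[2]) j = if n.testBit j then 1 else 0 := by
  rw [dig, appr_nat, Nat.testBit_mod_two_pow]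
  simp

lemma Rk_spec (k : ℕ) (x : ℤ_[2]) : x = ((Lk k x : ℕ) : ℤ_[2]) + 2^k * Rk k x :=
  (exists_Rk k x).choose_spec

lemma alphaNat_zero : alphaNat 0 = 0 := by simp [alphaNat]

lemma alphaNat_rec (n : ℕ) (hn : n ≠ 0) :
    alphaNat n = (if n.testBit 0 then 1 else 0) + alphaNat (n / 2) := by
  rcases Nat.mod_two_eq_zero_or_one n with h | h
  · have h2 : n = 2 * (n / 2) := by omega
    have hd : n / 2 ≠ 0 := by omega
    rw [alphaNat, alphaNat, show n.testBit 0 = false by simp [Nat.testBit_zero, h]]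
    conv_lhs => rw [h2, Nat.bit0_bits _ hd]
    simp
  · have h2 : n = 2 * (n / 2) + 1 := by omega
    rw [alphaNat, alphaNat, show n.testBit 0 = true by simp [Nat.testBit_zero, h]]
    conv_lhs => rw [h2, Nat.bit1_bits]
    simp [add_comm]

lemma alphaNat_sum {w n : ℕ} (h : n < 2 ^ w) :
    alphaNat n = ∑ j ∈ Finset.range w, (if n.testBit j then 1 else 0) := by
  induction w generalizing n with
  | zero =>
    interval_cases n
    simp [alphaNat_zero]
  | succ w ih =>
    rcases eq_or_ne n 0 with rfl | hn
    · simp [alphaNat_zero]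
    · rw [alphaNat_rec n hn, Finset.sum_range_succ']
      have hdiv : n / 2 < 2 ^ w := by
        have : (2:ℕ) ^ (w+1) = 2 ^ w * 2 := by ring
        omega
      rw [ih hdiv]
      simp only [Nat.testBit_add_one]
      omega

lemma dig_lt (k : ℕ) (x : ℤ_[2]) {j : ℕ} (hj : j < k) :
    dig x j = if (Lk k x).testBit j then 1 else 0 := by
  rw [← dig_nat]
  apply dig_congr
  have e : x - ((Lk k x : ℕ):ℤ_[2]) = 2^k * Rk k x := by linear_combination Rk_spec k x
  rw [e]
  exact dvd_mul_of_dvd_left (pow_dvd_pow 2 (by omega)) _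

lemma dig_ge (k : ℕ) (x : ℤ_[2]) (i : ℕ) : dig x (k + i) = dig (Rk k x) i := by
  set R := Rk k x with hRdef
  set B := R.appr (i+1) with hBdef
  have hB : (2:ℤ_[2])^(i+1) ∣ R - B := two_pow_dvd_sub_appr _ _
  have hcong : (2:ℤ_[2])^(k+i+1) ∣ x - ((Lk k x + 2^k * B : ℕ) : ℤ_[2]) := by
    have e : x - ((Lk k x + 2^k * B : ℕ) : ℤ_[2]) = 2^k * (R - B) := by
      push_cast
      linear_combination Rk_spec k x
    rw [e, show k + i + 1 = k + (i+1) from rfl, pow_add]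
    exact mul_dvd_mul_left _ hB
  rw [dig_congr hcong, dig_nat]
  have hL : Lk k x < 2^k := appr_lt2 x k
  have ht : (2^k * B + Lk k x).testBit (k+i) = B.testBit i := by
    rw [Nat.testBit_two_pow_mul_add _ hL, if_neg (show ¬ (k + i < k) by omega),
      Nat.add_sub_cancel_left]
  rw [show Lk k x + 2^k * B = 2^k * B + Lk k x from by ring, ht]
  rfl

lemma Lk_lt (k : ℕ) (x : ℤ_[2]) : Lk k x < 2 ^ k := PadicInt.appr_lt x k

lemma digCount_eq_alpha (k : ℕ) (x : ℤ_[2]) : digCount x k = alphaNat (Lk k x) := by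
  rw [digCount, alphaNat_sum (Lk_lt k x)]
  exact Finset.sum_congr rfl fun j hj => dig_lt k x (Finset.mem_range.mp hj)

lemma digCount_ge (k : ℕ) (x : ℤ_[2]) (i : ℕ) :
    digCount x (k + i) = alphaNat (Lk k x) + digCount (Rk k x) i := by
  rw [digCount, Finset.sum_range_add, ← digCount, digCount_eq_alpha, digCount]
  congr 1
  exact Finset.sum_congr rfl fun t _ => dig_ge k x t

lemma norm_two : ‖(2:ℤ_[2])‖ = 1/2 := by
  have := PadicInt.norm_p (p := 2)
  simpa using this

lemma term_summable (x : ℤ_[2]) :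
    Summable (fun j => (dig x j : ℤ_[2]) * 2 ^ j * inv3 ^ digCount x j) := by
  apply Summable.of_norm
  apply Summable.of_nonneg_of_le (fun j => norm_nonneg _) (fun j => ?_)
    summable_geometric_two
  have e : ‖(dig x j : ℤ_[2]) * 2 ^ j * inv3 ^ digCount x j‖
      = ‖(dig x j : ℤ_[2])‖ * (1/2) ^ j * ‖inv3 ^ digCount x j‖ := by
    rw [norm_mul, norm_mul, norm_pow, norm_two]
  rw [e]
  calc ‖(dig x j : ℤ_[2])‖ * (1/2) ^ j * ‖inv3 ^ digCount x j‖
      ≤ 1 * (1/2)^j * 1 := by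
        gcongr <;> first | exact PadicInt.norm_le_one _
    _ = (1/2)^j := by ring

end

/-- `Φ(x) = Φ(L_k(x)) + (Φ(R_k(x))/3^m)·2^k` with `m = α(L_k(x))`. -/
theorem stmt8 (x : ℤ_[2]) (k : ℕ) :
    Phi x = Phi ((Lk k x : ℕ) : ℤ_[2]) +
      Phi (Rk k x) * inv3 ^ alphaNat (Lk k x) * 2 ^ k := by
  have hsum := term_summable x
  have hsplit := (Summable.sum_add_tsum_nat_add (f := fun j => (dig x j : ℤ_[2]) * 2 ^ j * inv3 ^ digCount x j) k hsum).symm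
  have hLlt : Lk k x < 2^k := Lk_lt k x
  have hPhiL : Phi ((Lk k x : ℕ) : ℤ_[2])
      = -∑ j ∈ Finset.range k, (dig x j : ℤ_[2]) * 2 ^ j * inv3 ^ digCount x j := by
    rw [Phi]
    congr 1
    rw [tsum_eq_sum (s := Finset.range k) (f := fun j =>
        (dig ((Lk k x : ℕ) : ℤ_[2]) j : ℤ_[2]) * 2 ^ j * inv3 ^ digCount ((Lk k x : ℕ) : ℤ_[2]) j)
      (fun j hj => by
        have hj' : k ≤ j := by simpa using hj
        have : dig ((Lk k x : ℕ) : ℤ_[2]) j = 0 := by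
          rw [dig_nat, Nat.testBit_lt_two_pow
            (lt_of_lt_of_le hLlt (Nat.pow_le_pow_right (by norm_num) hj'))]
          simp
        simp [this])]
    apply Finset.sum_congr rfl
    intro j hj
    have hj' : j < k := Finset.mem_range.mp hj
    have hd : dig ((Lk k x : ℕ) : ℤ_[2]) j = dig x j := by
      rw [dig_nat, dig_lt k x hj']
    have hdc : digCount ((Lk k x : ℕ) : ℤ_[2]) j = digCount x j := by
      rw [digCount, digCount]
      apply Finset.sum_congr rfl
      intro i hi
      have hi' : i < k := lt_trans (Finset.mem_range.mp hi) hj'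
      rw [dig_nat, dig_lt k x hi']
    rw [hd, hdc]
  have htail : ∀ i : ℕ, (dig x (i + k) : ℤ_[2]) * 2 ^ (i + k) * inv3 ^ digCount x (i + k)
      = ((dig (Rk k x) i : ℤ_[2]) * 2 ^ i * inv3 ^ digCount (Rk k x) i)
        * (inv3 ^ alphaNat (Lk k x) * 2 ^ k) := by
    intro i
    have h1 : dig x (i + k) = dig (Rk k x) i := by rw [add_comm]; exact dig_ge k x i
    have h2 : digCount x (i + k) = alphaNat (Lk k x) + digCount (Rk k x) i := by
      rw [add_comm]; exact digCount_ge k x i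
    rw [h1, h2, pow_add, pow_add]
    ring
  have hts : ∑' i : ℕ, (dig x (i + k) : ℤ_[2]) * 2 ^ (i + k) * inv3 ^ digCount x (i + k)
      = (∑' i : ℕ, (dig (Rk k x) i : ℤ_[2]) * 2 ^ i * inv3 ^ digCount (Rk k x) i)
        * (inv3 ^ alphaNat (Lk k x) * 2 ^ k) := by
    rw [tsum_congr htail]
    exact (term_summable (Rk k x)).tsum_mul_right _
  have hPhiR : ∑' i : ℕ, (dig (Rk k x) i : ℤ_[2]) * 2 ^ i * inv3 ^ digCount (Rk k x) i
      = -Phi (Rk k x) := by rw [Phi]; ring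
  rw [Phi, hsplit, hts, hPhiR, hPhiL]
  ring
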